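/- Let K be a difference field. Then there is an extension E of K in the category of difference fields such that: E is a model of FF; E is algebraic over K as a field extension; and for every model L of FF which is a difference field extension of K, there is a unique difference-field embedding of E into L over K. Moreover, if K is closed under twists, then E is separably algebraic over K. -/

import Mathlib

/-! STATEMENT 5: every difference field `K` admits a smallest model of FF over it:
an algebraic difference field extension `E ⊨ FF` embedding uniquely over `K` into any
model of FF extending `K`; if `K` is closed under twists then `E/K` is separably
algebraic. -/

universe u v

/-- A difference field: a field equipped with a ring endomorphism `sg`. -/
structure DiffField : Type (u + 1) where
  carrier : Type u
  [fld : Field carrier]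
  sg : carrier →+* carrier

attribute [instance] DiffField.fld

/-- Closed under twists: every `σ x` has all `p`-power roots. -/
def ClosedUnderTwists (p : ℕ) {F : Type*} [Field F] (σ : F →+* F) : Prop :=
  ∀ (x : F) (n : ℕ), ∃ y : F, y ^ p ^ n = σ x

/-- `x` is separably algebraic over the subfield `A`: a simple root of a polynomial
with coefficients in `A`. -/
def IsSepAlgElemOver {Ω : Type*} [Field Ω] (A : Subfield Ω) (x : Ω) : Prop :=
  ∃ f : Polynomial Ω, (∀ n, f.coeff n ∈ A) ∧ Polynomial.eval x f = 0 ∧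
    Polynomial.eval x (Polynomial.derivative f) ≠ 0

/-- `x` is algebraic over the subfield `A`. -/
def IsAlgElemOver {Ω : Type*} [Field Ω] (A : Subfield Ω) (x : Ω) : Prop :=
  ∃ f : Polynomial Ω, f ≠ 0 ∧ (∀ n, f.coeff n ∈ A) ∧ Polynomial.eval x f = 0

/-- A difference field `(F, σ)` of characteristic exponent `p` is a model of FF:
it is closed under twists and `σ(F)` is relatively separably algebraically closed
in `F`. -/
def IsFF (p : ℕ) {F : Type*} [Field F] (σ : F →+* F) : Prop :=
  ClosedUnderTwists p σ ∧
  ∀ x : F, IsSepAlgElemOver σ.fieldRange x → x ∈ σ.fieldRange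

section Helpers
open Polynomial
variable {F : Type*} [Field F]

lemma pow_p_injective (p n : ℕ) [ExpChar F p] :
    Function.Injective (fun x : F => x ^ p ^ n) := by
  intro a b h
  have := sub_pow_expChar_pow (R := F) a b (p := p) (n := n)
  simp only at h
  rw [h, sub_self] at this
  have hp : p ^ n ≠ 0 := by
    rcases ‹ExpChar F p› with _ | hp
    · simp
    · exact pow_ne_zero _ hp.ne_zero
  have h2 : (a - b) ^ p ^ n = 0 := this
  have := pow_eq_zero_iff hp |>.mp h2
  exact sub_eq_zero.mp this

lemma isSeparable_of_simple_root {Ω : Type*} [Field Ω] [Algebra F Ω] {z : Ω} {V : F[X]}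
    (h0 : aeval z V = 0) (h1 : aeval z (derivative V) ≠ 0) : IsSeparable F z := by
  have hV : V ≠ 0 := by rintro rfl; simp at h1
  have hint : IsIntegral F z := (IsAlgebraic.isIntegral ⟨V, hV, h0⟩)
  obtain ⟨q, hq⟩ := minpoly.dvd F z h0
  have hd : aeval z (derivative V) = aeval z (derivative (minpoly F z)) * aeval z q := by
    rw [hq, derivative_mul, map_add, map_mul, map_mul, minpoly.aeval, zero_mul, add_zero]
  rw [hd] at h1
  have : aeval z (derivative (minpoly F z)) ≠ 0 := fun h => h1 (by rw [h, zero_mul])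
  have hne : derivative (minpoly F z) ≠ 0 := fun h => this (by rw [h, map_zero])
  exact (Polynomial.separable_iff_derivative_ne_zero (minpoly.irreducible hint)).mpr hne
end Helpers


namespace S5
variable (K : DiffField.{u})

noncomputable abbrev Om := AlgebraicClosure K.carrier

noncomputable def alg2 : Algebra K.carrier (Om K) :=
  ((algebraMap K.carrier (Om K)).comp K.sg).toAlgebra

noncomputable def sbA : @AlgHom K.carrier (Om K) (Om K) _ _ _ _ (alg2 K) :=
  haveI h2 : @Module.IsTorsionFree K.carrier (Om K) _ _ (alg2 K).toModule :=
    (@Module.isTorsionFree_iff_algebraMap_injective K.carrier (Om K) _ _ (alg2 K) _ _).mpr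
      (((algebraMap K.carrier (Om K)).comp K.sg).injective)
  @IsAlgClosed.lift (Om K) _ _ K.carrier _ _ (Om K) _ _ _ (alg2 K) _ h2 _

noncomputable def sb : Om K →+* Om K := @AlgHom.toRingHom K.carrier (Om K) (Om K) _ _ _ _ (alg2 K) (sbA K)

lemma sb_alg (k : K.carrier) :
    sb K (algebraMap K.carrier (Om K) k) = algebraMap K.carrier (Om K) (K.sg k) := by
  have h := @AlgHom.commutes K.carrier (Om K) (Om K) _ _ _ _ (alg2 K) (sbA K) k
  exact h

open Polynomial

variable (p : ℕ)

noncomputable def KK : Subfield (Om K) := (algebraMap K.carrier (Om K)).fieldRange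

def SepOver (T : Subfield (Om K)) (x : Om K) : Prop :=
  ∃ f : (Om K)[X], (∀ n, f.coeff n ∈ sb K '' T) ∧ f.eval x = 0 ∧ (derivative f).eval x ≠ 0

def Fam : Set (Subfield (Om K)) :=
  {T | KK K ≤ T ∧ (∀ x ∈ T, sb K x ∈ T) ∧
    (∀ x ∈ T, ∀ n : ℕ, ∀ y : Om K, y ^ p ^ n = sb K x → y ∈ T) ∧
    (∀ x ∈ T, SepOver K T x → ∀ z : Om K, sb K z = x → z ∈ T)}

noncomputable def EE : Subfield (Om K) := sInf (Fam K p)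

lemma mem_EE {x : Om K} : x ∈ EE K p ↔ ∀ T ∈ Fam K p, x ∈ T := Subfield.mem_sInf

lemma SepOver.mono {T T' : Subfield (Om K)} (h : T ≤ T') {x : Om K}
    (hx : SepOver K T x) : SepOver K T' x := by
  obtain ⟨f, hc, he, hd⟩ := hx
  exact ⟨f, fun n => Set.image_mono h (hc n), he, hd⟩

lemma EE_mem_Fam : EE K p ∈ Fam K p := by
  refine ⟨?_, ?_, ?_, ?_⟩
  · exact le_sInf fun T hT => hT.1
  · intro x hx
    rw [mem_EE] at hx ⊢
    exact fun T hT => hT.2.1 x (hx T hT)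
  · intro x hx n y hy
    rw [mem_EE] at hx ⊢
    exact fun T hT => hT.2.2.1 x (hx T hT) n y hy
  · intro x hx hsep z hz
    rw [mem_EE] at hx ⊢
    intro T hT
    exact hT.2.2.2 x (hx T hT) (hsep.mono K (sInf_le hT)) z hz

lemma KK_le_EE : KK K ≤ EE K p := (EE_mem_Fam K p).1

lemma sb_mem_EE {x : Om K} (hx : x ∈ EE K p) : sb K x ∈ EE K p := (EE_mem_Fam K p).2.1 x hx

lemma exists_preimage_poly_sb (T : Subfield (Om K)) {W : (Om K)[X]}
    (hW : ∀ n, W.coeff n ∈ sb K '' T) :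
    ∃ V : Polynomial ↥T, V.map ((sb K).comp T.subtype) = W := by
  rw [show (∃ V : Polynomial ↥T, V.map ((sb K).comp T.subtype) = W) ↔ W ∈ Polynomial.lifts ((sb K).comp T.subtype) from (Polynomial.mem_lifts _).symm]
  rw [Polynomial.lifts_iff_coeff_lifts]
  intro n
  obtain ⟨t, ht, h⟩ := hW n
  exact ⟨⟨t, ht⟩, h⟩

lemma exists_preimage_poly_sub (T : Subfield (Om K)) {W : (Om K)[X]}
    (hW : ∀ n, W.coeff n ∈ T) :
    ∃ V : Polynomial ↥T, V.map T.subtype = W := by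
  rw [show (∃ V : Polynomial ↥T, V.map T.subtype = W) ↔ W ∈ Polynomial.lifts T.subtype from (Polynomial.mem_lifts _).symm, Polynomial.lifts_iff_coeff_lifts]
  exact fun n => ⟨⟨W.coeff n, hW n⟩, rfl⟩

lemma exists_sb_preimage {T : Subfield (Om K)} {x : Om K} (hx : SepOver K T x) :
    ∃ z : Om K, sb K z = x := by
  obtain ⟨W, hc, he, hd⟩ := hx
  have hW : W ≠ 0 := by rintro rfl; simp at hd
  have : W ∈ Polynomial.lifts (sb K) := by
    rw [Polynomial.lifts_iff_coeff_lifts]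
    intro n
    obtain ⟨t, _, h⟩ := hc n
    exact ⟨t, h⟩
  obtain ⟨V, hV⟩ := (Polynomial.mem_lifts _).mp this
  have hVne : V ≠ 0 := by rintro rfl; simp at hV; exact hW hV.symm
  have hsplit : V.Splits := IsAlgClosed.splits V
  have hroots : (V.map (sb K)).roots = V.roots.map (sb K) := hsplit.roots_map (sb K)
  have hmapne : V.map (sb K) ≠ 0 := by rw [hV]; exact hW
  have hmem : x ∈ (V.map (sb K)).roots := by
    rw [mem_roots hmapne]
    rw [IsRoot, hV]; exact he
  rw [hroots, Multiset.mem_map] at hmem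
  obtain ⟨z, _, hz⟩ := hmem
  exact ⟨z, hz⟩

lemma exists_pow_root [ExpChar K.carrier p] (x : Om K) (n : ℕ) :
    ∃ y : Om K, y ^ p ^ n = x := by
  apply IsAlgClosed.exists_pow_nat_eq
  have hp : 0 < p := by
    rcases ‹ExpChar K.carrier p› with _ | hp
    · exact one_pos
    · exact hp.pos
  exact pow_pos hp n

noncomputable def sbE : ↥(EE K p) →+* ↥(EE K p) :=
  RingHom.codRestrict ((sb K).comp (EE K p).subtype) (EE K p)
    (fun x => sb_mem_EE K p x.2)

@[simp] lemma sbE_coe (x : ↥(EE K p)) : (sbE K p x : Om K) = sb K x := rfl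

noncomputable def iota : K.carrier →+* ↥(EE K p) :=
  RingHom.codRestrict (algebraMap K.carrier (Om K)) (EE K p)
    (fun k => KK_le_EE K p ⟨k, rfl⟩)

@[simp] lemma iota_coe (k : K.carrier) : (iota K p k : Om K) = algebraMap K.carrier (Om K) k := rfl

lemma iota_sb (k : K.carrier) : iota K p (K.sg k) = sbE K p (iota K p k) :=
  Subtype.ext (by simp [sb_alg])

section
variable [ExpChar K.carrier p]

lemma expChar_Om : ExpChar (Om K) p :=
  expChar_of_injective_ringHom (algebraMap K.carrier (Om K)).injective p

lemma twists_EE : ClosedUnderTwists p (sbE K p) := by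
  intro x n
  obtain ⟨y, hy⟩ := exists_pow_root K p (sb K x) n
  have hyE : y ∈ EE K p := (EE_mem_Fam K p).2.2.1 x x.2 n y hy
  refine ⟨⟨y, hyE⟩, Subtype.ext ?_⟩
  push_cast
  exact hy

lemma sepcl_EE (x : ↥(EE K p))
    (hx : ∃ f : Polynomial ↥(EE K p), (∀ n, f.coeff n ∈ (sbE K p).fieldRange) ∧
      f.eval x = 0 ∧ (derivative f).eval x ≠ 0) :
    x ∈ (sbE K p).fieldRange := by
  obtain ⟨f, hc, he, hd⟩ := hx
  have hsep : SepOver K (EE K p) (x : Om K) := by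
    refine ⟨f.map (EE K p).subtype, ?_, ?_, ?_⟩
    · intro n
      rw [Polynomial.coeff_map]
      obtain ⟨t, ht⟩ := hc n
      exact ⟨t, t.2, by rw [← ht]; rfl⟩
    · rw [Polynomial.eval_map]
      show Polynomial.eval₂ (EE K p).subtype ((EE K p).subtype x) f = 0
      rw [Polynomial.eval₂_at_apply, he]; rfl
    · rw [Polynomial.derivative_map, Polynomial.eval_map]
      show Polynomial.eval₂ (EE K p).subtype ((EE K p).subtype x) (derivative f) ≠ 0
      rw [Polynomial.eval₂_at_apply]
      intro h
      exact hd (Subtype.ext h)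
  obtain ⟨z, hz⟩ := exists_sb_preimage K hsep
  have hzE : z ∈ EE K p := (EE_mem_Fam K p).2.2.2 x x.2 hsep z hz
  exact ⟨⟨z, hzE⟩, Subtype.ext (by simpa using hz)⟩

lemma alg_EE (x : ↥(EE K p)) :
    ∃ f : Polynomial ↥(EE K p), f ≠ 0 ∧ (∀ n, f.coeff n ∈ (iota K p).fieldRange) ∧
      f.eval x = 0 := by
  have halg : IsAlgebraic K.carrier (x : Om K) := Algebra.IsAlgebraic.isAlgebraic _
  obtain ⟨P, hPne, hP⟩ := halg
  refine ⟨P.map (iota K p), ?_, ?_, ?_⟩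
  · intro h
    exact hPne (Polynomial.map_injective _ (iota K p).injective (by rw [h, Polynomial.map_zero]))
  · intro n
    rw [Polynomial.coeff_map]
    exact ⟨P.coeff n, rfl⟩
  · apply Subtype.ext
    have h1 : (EE K p).subtype ((P.map (iota K p)).eval x)
        = Polynomial.eval₂ (EE K p).subtype ((EE K p).subtype x) (P.map (iota K p)) :=
      (Polynomial.eval₂_at_apply _ _).symm
    have h2 : Polynomial.eval₂ (EE K p).subtype ((EE K p).subtype x) (P.map (iota K p))
        = Polynomial.eval₂ ((EE K p).subtype.comp (iota K p)) (x : Om K) P := by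
      rw [Polynomial.eval₂_map]; rfl
    have h3 : Polynomial.eval₂ ((EE K p).subtype.comp (iota K p)) (x : Om K) P
        = Polynomial.aeval (x : Om K) P := rfl
    show (EE K p).subtype ((P.map (iota K p)).eval x) = ((0 : ↥(EE K p)) : Om K)
    rw [h1, h2, h3, hP]
    rfl
end

lemma sb_comp_alg : (sb K).comp (algebraMap K.carrier (Om K))
    = (algebraMap K.carrier (Om K)).comp K.sg := RingHom.ext (sb_alg K)

lemma isSep_sb {x : Om K} (hx : IsSeparable K.carrier x) : IsSeparable K.carrier (sb K x) := by
  have hint : IsIntegral K.carrier x := hx.isIntegral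
  set m := minpoly K.carrier x with hm
  have haev : Polynomial.aeval (sb K x) (m.map K.sg) = 0 := by
    show Polynomial.eval₂ (algebraMap K.carrier (Om K)) (sb K x) (m.map K.sg) = 0
    rw [Polynomial.eval₂_map, ← sb_comp_alg, ← Polynomial.hom_eval₂]
    rw [show Polynomial.eval₂ (algebraMap K.carrier (Om K)) x m = Polynomial.aeval x m from rfl]
    rw [minpoly.aeval, map_zero]
  have hsep : (m.map K.sg).Separable := Polynomial.Separable.map hx
  exact hsep.of_dvd (minpoly.dvd _ _ haev)

lemma aeval_sb_map_sg {x : Om K} {m : Polynomial K.carrier}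
    (hm : Polynomial.aeval x m = 0) :
    Polynomial.eval₂ (algebraMap K.carrier (Om K)) (sb K x) (m.map K.sg) = 0 := by
  rw [Polynomial.eval₂_map, ← sb_comp_alg, ← Polynomial.hom_eval₂]
  rw [show Polynomial.eval₂ (algebraMap K.carrier (Om K)) x m = Polynomial.aeval x m from rfl]
  rw [hm, map_zero]

section
variable [ExpChar K.carrier p]

lemma isSep_twist_root (hKtw : ClosedUnderTwists p K.sg) {x : Om K}
    (hx : IsSeparable K.carrier x) {n : ℕ} {y : Om K} (hy : y ^ p ^ n = sb K x) :
    IsSeparable K.carrier y := by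
  haveI : ExpChar (Om K) p := expChar_Om K p
  have hpn : p ^ n ≠ 0 := (expChar_pow_pos K.carrier p n).ne'
  have hint : IsIntegral K.carrier x := hx.isIntegral
  set m := minpoly K.carrier x with hm
  classical
  choose b hbp using fun i : ℕ => hKtw (m.coeff i) n
  set h : Polynomial K.carrier := ∑ i ∈ m.support, Polynomial.C (b i) * Polynomial.X ^ i with hh
  have hb0 : ∀ j, j ∉ m.support → b j = 0 := by
    intro j hj
    have h0 : m.coeff j = 0 := Polynomial.notMem_support_iff.mp hj
    have h2 := hbp j
    rw [h0, map_zero] at h2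
    exact (pow_eq_zero_iff hpn).mp h2
  have hcoeff : ∀ j, h.coeff j = b j := by
    intro j
    rw [hh, Polynomial.finset_sum_coeff]
    by_cases hj : j ∈ m.support
    · rw [Finset.sum_eq_single j]
      · rw [Polynomial.coeff_C_mul, Polynomial.coeff_X_pow, if_pos rfl, mul_one]
      · intro i _ hij
        rw [Polynomial.coeff_C_mul, Polynomial.coeff_X_pow, if_neg (Ne.symm hij), mul_zero]
      · intro h'
        exact absurd hj h'
    · rw [hb0 j hj]
      apply Finset.sum_eq_zero
      intro i hi
      have hne : j ≠ i := fun e => hj (e ▸ hi)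
      rw [Polynomial.coeff_C_mul, Polynomial.coeff_X_pow, if_neg hne, mul_zero]
  have hmap : h.map (iterateFrobenius K.carrier p n) = m.map K.sg := by
    ext j
    rw [Polynomial.coeff_map, Polynomial.coeff_map, hcoeff, iterateFrobenius_def, hbp]
  have hsepm : (m.map K.sg).Separable := Polynomial.Separable.map hx
  have hseph : h.Separable := (Polynomial.separable_map _).mp (by rw [hmap]; exact hsepm)
  have haev : Polynomial.aeval y h = 0 := by
    have hcomp : (iterateFrobenius (Om K) p n).comp (algebraMap K.carrier (Om K))
        = (algebraMap K.carrier (Om K)).comp (iterateFrobenius K.carrier p n) := by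
      ext a
      simp only [RingHom.comp_apply, iterateFrobenius_def, map_pow]
    have h1 : iterateFrobenius (Om K) p n (Polynomial.aeval y h)
        = Polynomial.eval₂ ((algebraMap K.carrier (Om K)).comp (iterateFrobenius K.carrier p n))
            (y ^ p ^ n) h := by
      rw [show Polynomial.aeval y h
          = Polynomial.eval₂ (algebraMap K.carrier (Om K)) y h from rfl]
      rw [Polynomial.hom_eval₂, hcomp]
      rfl
    rw [← Polynomial.eval₂_map, hy, hmap, aeval_sb_map_sg K (minpoly.aeval _ _)] at h1
    have h2 : (Polynomial.aeval y h) ^ p ^ n = 0 := by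
      rw [← iterateFrobenius_def (R := Om K) (p := p) (n := n), h1]
    exact (pow_eq_zero_iff hpn).mp h2
  exact Polynomial.Separable.of_dvd hseph (minpoly.dvd _ _ haev)
end

lemma eval_map_iota (P : Polynomial K.carrier) (x : ↥(EE K p)) :
    (EE K p).subtype ((P.map (iota K p)).eval x) = Polynomial.aeval (x : Om K) P := by
  have h1 : (EE K p).subtype ((P.map (iota K p)).eval x)
      = Polynomial.eval₂ (EE K p).subtype ((EE K p).subtype x) (P.map (iota K p)) :=
    (Polynomial.eval₂_at_apply _ _).symm
  have h2 : Polynomial.eval₂ (EE K p).subtype ((EE K p).subtype x) (P.map (iota K p))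
      = Polynomial.eval₂ ((EE K p).subtype.comp (iota K p)) (x : Om K) P := by
    rw [Polynomial.eval₂_map]; rfl
  rw [h1, h2]; rfl

section
variable [ExpChar K.carrier p]

lemma SC_mem_Fam (hKtw : ClosedUnderTwists p K.sg) :
    (separableClosure K.carrier (Om K)).toSubfield ∈ Fam K p := by
  classical
  set SC := separableClosure K.carrier (Om K) with hSC
  refine ⟨?_, ?_, ?_, ?_⟩
  · rintro w ⟨k, rfl⟩
    exact (IntermediateField.mem_toSubfield _ _).mpr (SC.algebraMap_mem k)
  · intro x hx
    exact (IntermediateField.mem_toSubfield _ _).mpr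
      (mem_separableClosure_iff.mpr (isSep_sb K
        (mem_separableClosure_iff.mp ((IntermediateField.mem_toSubfield _ _).mp hx))))
  · intro x hx n y hy
    exact (IntermediateField.mem_toSubfield _ _).mpr
      (mem_separableClosure_iff.mpr (isSep_twist_root K p hKtw
        (mem_separableClosure_iff.mp ((IntermediateField.mem_toSubfield _ _).mp hx)) hy))
  · intro x hx hsep z hz
    obtain ⟨W, hc, he, hd⟩ := hsep
    have hl : ∀ nn, W.coeff nn ∈ Set.range ((sb K).comp (algebraMap ↥SC (Om K))) := by
      intro nn
      obtain ⟨t, htS, hts⟩ := hc nn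
      exact ⟨⟨t, (IntermediateField.mem_toSubfield _ _).mp htS⟩, hts⟩
    obtain ⟨V, hV⟩ := (Polynomial.mem_lifts _).mp ((Polynomial.lifts_iff_coeff_lifts _).mpr hl)
    have keyV : sb K (Polynomial.aeval z V) = W.eval x := by
      rw [show Polynomial.aeval z V
          = Polynomial.eval₂ (algebraMap ↥SC (Om K)) z V from rfl]
      rw [Polynomial.hom_eval₂, hz, ← Polynomial.eval_map, hV]
    have keyV' : sb K (Polynomial.aeval z (Polynomial.derivative V))
        = (Polynomial.derivative W).eval x := by
      rw [show Polynomial.aeval z (Polynomial.derivative V)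
          = Polynomial.eval₂ (algebraMap ↥SC (Om K)) z (Polynomial.derivative V) from rfl]
      rw [Polynomial.hom_eval₂, hz, ← Polynomial.eval_map, ← Polynomial.derivative_map, hV]
    have h0 : Polynomial.aeval z V = 0 := by
      apply (sb K).injective
      rw [keyV, he, map_zero]
    have h1 : Polynomial.aeval z (Polynomial.derivative V) ≠ 0 := by
      intro e
      apply hd
      rw [← keyV', e, map_zero]
    have hzsep : IsSeparable (↥SC) z := isSeparable_of_simple_root h0 h1
    exact (IntermediateField.mem_toSubfield _ _).mpr
      (mem_separableClosure_iff.mpr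
        (IsSeparable.of_algebra_isSeparable_of_isSeparable K.carrier hzsep))

lemma sep_EE (hKtw : ClosedUnderTwists p K.sg) (x : ↥(EE K p)) :
    ∃ f : Polynomial ↥(EE K p), (∀ n, f.coeff n ∈ (iota K p).fieldRange) ∧
      f.eval x = 0 ∧ (Polynomial.derivative f).eval x ≠ 0 := by
  have hxS : IsSeparable K.carrier (x : Om K) := by
    have hle : EE K p ≤ (separableClosure K.carrier (Om K)).toSubfield :=
      sInf_le (SC_mem_Fam K p hKtw)
    exact mem_separableClosure_iff.mp ((IntermediateField.mem_toSubfield _ _).mp (hle x.2))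
  have hint : IsIntegral K.carrier (x : Om K) := hxS.isIntegral
  set m := minpoly K.carrier (x : Om K) with hm
  refine ⟨m.map (iota K p), ?_, ?_, ?_⟩
  · intro n
    rw [Polynomial.coeff_map]
    exact ⟨m.coeff n, rfl⟩
  · apply Subtype.ext
    show (EE K p).subtype ((m.map (iota K p)).eval x) = ((0 : ↥(EE K p)) : Om K)
    rw [eval_map_iota, minpoly.aeval]
    rfl
  · intro e
    have : (EE K p).subtype ((Polynomial.derivative (m.map (iota K p))).eval x) = 0 := by
      rw [e]; rfl
    rw [Polynomial.derivative_map, eval_map_iota] at this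
    exact hxS.aeval_derivative_ne_zero (minpoly.aeval _ _) this
end

section Univ
variable (L : DiffField.{v}) (j : K.carrier →+* L.carrier)

structure Partial : Type (max u v) where
  T : Subfield (Om K)
  hK : KK K ≤ T
  hE : T ≤ EE K p
  hs : ∀ x ∈ T, sb K x ∈ T
  f : ↥T →+* L.carrier
  hcomp : ∀ (x : Om K) (hx : x ∈ T), f ⟨sb K x, hs x hx⟩ = L.sg (f ⟨x, hx⟩)
  hjc : ∀ k : K.carrier, f ⟨algebraMap K.carrier (Om K) k, hK ⟨k, rfl⟩⟩ = j k

instance : Preorder (Partial K p L j) where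
  le A B := ∃ h : A.T ≤ B.T, ∀ (x : Om K) (hx : x ∈ A.T), B.f ⟨x, h hx⟩ = A.f ⟨x, hx⟩
  le_refl A := ⟨le_refl _, fun x hx => rfl⟩
  le_trans A B C := fun ⟨h1, e1⟩ ⟨h2, e2⟩ =>
    ⟨h1.trans h2, fun x hx => (e2 x (h1 hx)).trans (e1 x hx)⟩

noncomputable def h0 : K.carrier →+* ↥(KK K) :=
  RingHom.codRestrict (algebraMap K.carrier (Om K)) (KK K) (fun k => ⟨k, rfl⟩)

lemma h0_bij : Function.Bijective (h0 K) := by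
  constructor
  · intro a b hab
    exact (algebraMap K.carrier (Om K)).injective (congrArg Subtype.val hab)
  · rintro ⟨w, ⟨k, rfl⟩⟩
    exact ⟨k, rfl⟩

noncomputable def P0 (hj : ∀ k, j (K.sg k) = L.sg (j k)) : Partial K p L j where
  T := KK K
  hK := le_refl _
  hE := KK_le_EE K p
  hs := by
    rintro w ⟨k, rfl⟩
    exact ⟨K.sg k, (sb_alg K k).symm⟩
  f := j.comp (RingEquiv.ofBijective (h0 K) (h0_bij K)).symm.toRingHom
  hcomp := by
    have key : ∀ (u : ↥(KK K)) (kk : K.carrier),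
        u = (RingEquiv.ofBijective (h0 K) (h0_bij K)) kk →
        (j.comp (RingEquiv.ofBijective (h0 K) (h0_bij K)).symm.toRingHom) u = j kk := by
      rintro u kk rfl
      rw [RingHom.comp_apply, RingEquiv.toRingHom_eq_coe, RingHom.coe_coe,
        RingEquiv.symm_apply_apply]
    intro w hw
    obtain ⟨k, rfl⟩ := hw
    rw [key _ (K.sg k) (Subtype.ext (sb_alg K k)),
      key ⟨algebraMap K.carrier (Om K) k, ⟨k, rfl⟩⟩ k (Subtype.ext rfl)]
    exact hj k
  hjc := by
    have key : ∀ (u : ↥(KK K)) (kk : K.carrier),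
        u = (RingEquiv.ofBijective (h0 K) (h0_bij K)) kk →
        (j.comp (RingEquiv.ofBijective (h0 K) (h0_bij K)).symm.toRingHom) u = j kk := by
      rintro u kk rfl
      rw [RingHom.comp_apply, RingEquiv.toRingHom_eq_coe, RingHom.coe_coe,
        RingEquiv.symm_apply_apply]
    intro k
    exact key ⟨algebraMap K.carrier (Om K) k, ⟨k, rfl⟩⟩ k (Subtype.ext rfl)
end Univ

section Univ2
variable [ExpChar K.carrier p] {L : DiffField.{v}} {j : K.carrier →+* L.carrier}

lemma twist_extend (hLtw : ∀ (w : L.carrier) (n : ℕ), ∃ y : L.carrier, y ^ p ^ n = L.sg w)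
    (A : Partial K p L j) {x : Om K} (hx : x ∈ A.T) (n : ℕ) {y : Om K}
    (hy : y ^ p ^ n = sb K x) : ∃ B : Partial K p L j, A ≤ B ∧ y ∈ B.T := by
  classical
  haveI hXO : ExpChar (Om K) p := expChar_Om K p
  haveI hXL : ExpChar L.carrier p := expChar_of_injective_ringHom j.injective p
  have hpn : p ^ n ≠ 0 := (expChar_pow_pos K.carrier p n).ne'
  set u : ℕ → Om K := fun k => (sb K)^[k] (sb K x) with hu
  have hu0 : u 0 = sb K x := rfl
  have husucc : ∀ k, u (k + 1) = sb K (u k) := fun k => Function.iterate_succ_apply' _ _ _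
  have humem : ∀ k, u k ∈ A.T := by
    intro k
    induction k with
    | zero => exact A.hs x hx
    | succ k ih => rw [husucc]; exact A.hs _ ih
  have husb : ∀ k, ∃ w, ∃ _ : w ∈ A.T, u k = sb K w := by
    intro k
    cases k with
    | zero => exact ⟨x, hx, rfl⟩
    | succ k => exact ⟨u k, humem k, husucc k⟩
  set ys : ℕ → Om K := fun k => Classical.choose (exists_pow_root K p (u k) n) with hysdef
  have hys : ∀ k, (ys k) ^ p ^ n = u k := fun k =>
    Classical.choose_spec (exists_pow_root K p (u k) n)
  have hysE : ∀ k, ys k ∈ EE K p := by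
    intro k
    obtain ⟨w, hw, hweq⟩ := husb k
    have hwE : w ∈ EE K p := by
      cases k with
      | zero =>
        have : w = x := (sb K).injective (by rw [← hweq, hu0])
        rw [this]; exact A.hE hx
      | succ k =>
        have : w = u k := (sb K).injective (by rw [← hweq, husucc])
        rw [this]; exact A.hE (humem k)
    exact (EE_mem_Fam K p).2.2.1 w hwE n (ys k) (by rw [hys k, hweq])
  set S : Subfield (Om K) := Subfield.closure (↑A.T ∪ Set.range ys) with hS
  have hTS : A.T ≤ S := fun t ht => Subfield.subset_closure (Or.inl ht)
  have hysS : ∀ k, ys k ∈ S := fun k => Subfield.subset_closure (Or.inr ⟨k, rfl⟩)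
  have hpow : ∀ s ∈ S, s ^ p ^ n ∈ A.T := by
    intro s hs
    have hle : S ≤ Subfield.comap (iterateFrobenius (Om K) p n) A.T := by
      refine Subfield.closure_le.mpr ?_
      rintro w (hw | ⟨k, rfl⟩)
      · exact Subfield.mem_comap.mpr (pow_mem hw _)
      · exact Subfield.mem_comap.mpr (by rw [show iterateFrobenius (Om K) p n (ys k)
          = (ys k) ^ p ^ n from rfl, hys k]; exact humem k)
    exact Subfield.mem_comap.mp (hle hs)
  have hSE : S ≤ EE K p := by
    refine Subfield.closure_le.mpr ?_
    rintro w (hw | ⟨k, rfl⟩)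
    · exact A.hE hw
    · exact hysE k
  have hSs : ∀ s ∈ S, sb K s ∈ S := by
    have hle : S ≤ Subfield.comap (sb K) S := by
      refine Subfield.closure_le.mpr ?_
      rintro w (hw | ⟨k, rfl⟩)
      · exact Subfield.mem_comap.mpr (hTS (A.hs w hw))
      · refine Subfield.mem_comap.mpr ?_
        have : sb K (ys k) = ys (k + 1) := by
          apply pow_p_injective (F := Om K) p n
          show (sb K (ys k)) ^ p ^ n = (ys (k+1)) ^ p ^ n
          rw [← map_pow, hys k, hys (k+1), husucc]
        rw [this]
        exact hysS (k + 1)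
    exact fun s hs => Subfield.mem_comap.mp (hle hs)
  set g : ↥S →+* L.carrier :=
    A.f.comp (RingHom.codRestrict ((iterateFrobenius (Om K) p n).comp S.subtype) A.T
      (fun s => hpow s s.2)) with hg
  have hgval : ∀ (s : Om K) (hs : s ∈ S), g ⟨s, hs⟩ = A.f ⟨s ^ p ^ n, hpow s hs⟩ :=
    fun s hs => rfl
  have hgroot : ∀ s : ↥S, ∃ v : L.carrier, v ^ p ^ n = g s := by
    intro s
    set R : Subfield L.carrier := (iterateFrobenius L.carrier p n).fieldRange with hR
    have hle : S ≤ Subfield.map S.subtype (Subfield.comap g R) := by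
      refine Subfield.closure_le.mpr ?_
      rintro w (hw | ⟨k, rfl⟩)
      · refine ⟨⟨w, hTS hw⟩, Subfield.mem_comap.mpr ?_, rfl⟩
        rw [hgval]
        have : (⟨w ^ p ^ n, hpow w (hTS hw)⟩ : ↥A.T) = (⟨w, hw⟩ : ↥A.T) ^ p ^ n :=
          Subtype.ext (by push_cast; ring)
        rw [this, map_pow]
        exact ⟨A.f ⟨w, hw⟩, rfl⟩
      · refine ⟨⟨ys k, hysS k⟩, Subfield.mem_comap.mpr ?_, rfl⟩
        rw [hgval]
        obtain ⟨w, hw, hweq⟩ := husb k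
        have h1 : (⟨ys k ^ p ^ n, hpow _ (hysS k)⟩ : ↥A.T) = ⟨sb K w, A.hs w hw⟩ :=
          Subtype.ext (by show ys k ^ p ^ n = sb K w; rw [hys k, hweq])
        rw [h1, A.hcomp w hw]
        obtain ⟨v, hv⟩ := hLtw (A.f ⟨w, hw⟩) n
        exact ⟨v, hv⟩
    obtain ⟨s', hs', heq⟩ := hle s.2
    have : s' = s := Subtype.ext heq
    rw [← this]
    obtain ⟨v, hv⟩ := Subfield.mem_comap.mp hs'
    exact ⟨v, hv⟩
  choose vfun hv using hgroot
  have hLinj := pow_p_injective (F := L.carrier) p n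
  set f' : ↥S →+* L.carrier :=
    { toFun := vfun
      map_one' := by apply hLinj; show vfun 1 ^ p ^ n = 1 ^ p ^ n; rw [hv, map_one, one_pow]
      map_mul' := by
        intro a b
        apply hLinj
        show vfun (a * b) ^ p ^ n = (vfun a * vfun b) ^ p ^ n
        rw [mul_pow, hv, hv, hv]
        exact g.map_mul a b
      map_zero' := by
        apply hLinj
        show vfun 0 ^ p ^ n = 0 ^ p ^ n
        rw [hv, map_zero, zero_pow hpn]
      map_add' := by
        intro a b
        apply hLinj
        show vfun (a + b) ^ p ^ n = (vfun a + vfun b) ^ p ^ n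
        rw [add_pow_expChar_pow, hv, hv, hv]
        exact g.map_add a b } with hf'
  have hext : ∀ (t : Om K) (ht : t ∈ A.T), f' ⟨t, hTS ht⟩ = A.f ⟨t, ht⟩ := by
    intro t ht
    apply hLinj
    show vfun ⟨t, hTS ht⟩ ^ p ^ n = (A.f ⟨t, ht⟩) ^ p ^ n
    rw [hv, hgval]
    have : (⟨t ^ p ^ n, hpow t (hTS ht)⟩ : ↥A.T) = (⟨t, ht⟩ : ↥A.T) ^ p ^ n :=
      Subtype.ext (by push_cast; ring)
    rw [this, map_pow]
  refine ⟨⟨S, A.hK.trans hTS, hSE, hSs, f', ?_, ?_⟩, ⟨hTS, hext⟩, ?_⟩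
  · intro s hs
    apply hLinj
    show vfun ⟨sb K s, hSs s hs⟩ ^ p ^ n = (L.sg (vfun ⟨s, hs⟩)) ^ p ^ n
    have hstep : vfun ⟨sb K s, hSs s hs⟩ ^ p ^ n = L.sg (A.f ⟨s ^ p ^ n, hpow s hs⟩) := by
      rw [hv, hgval]
      have h1 : (⟨(sb K s) ^ p ^ n, hpow _ (hSs s hs)⟩ : ↥A.T)
          = ⟨sb K (s ^ p ^ n), A.hs _ (hpow s hs)⟩ :=
        Subtype.ext (by show (sb K s) ^ p ^ n = sb K (s ^ p ^ n); rw [map_pow])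
      rw [h1, A.hcomp _ (hpow s hs)]
    have hstep2 : (L.sg (vfun ⟨s, hs⟩)) ^ p ^ n = L.sg (A.f ⟨s ^ p ^ n, hpow s hs⟩) := by
      rw [← map_pow, hv, hgval]
    rw [hstep, hstep2]
  · intro k
    have halgmem : algebraMap K.carrier (Om K) k ∈ A.T := A.hK ⟨k, rfl⟩
    rw [show (⟨algebraMap K.carrier (Om K) k, _⟩ : ↥S)
        = ⟨algebraMap K.carrier (Om K) k, hTS halgmem⟩ from rfl]
    rw [hext _ halgmem]
    exact A.hjc k
  · exact (by
      have : y = ys 0 := by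
        apply pow_p_injective (F := Om K) p n
        show y ^ p ^ n = ys 0 ^ p ^ n
        rw [hy, hys 0, hu0]
      rw [this]; exact hysS 0)
end Univ2

section Univ3
open IntermediateField in
set_option maxHeartbeats 2000000 in
set_option synthInstance.maxHeartbeats 1000000 in
lemma sep_extend [ExpChar K.carrier p] {L : DiffField.{v}} {j : K.carrier →+* L.carrier}
    (hLsep : ∀ w : L.carrier, (∃ f : Polynomial L.carrier,
        (∀ n, f.coeff n ∈ L.sg.fieldRange) ∧ f.eval w = 0 ∧
        (Polynomial.derivative f).eval w ≠ 0) → w ∈ L.sg.fieldRange)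
    (A : Partial K p L j) {x : Om K} (hx : x ∈ A.T) (hsep : SepOver K A.T x)
    {z : Om K} (hz : sb K z = x) : ∃ B : Partial K p L j, A ≤ B ∧ z ∈ B.T := by
  classical
  set σT : ↥A.T →+* ↥A.T :=
    RingHom.codRestrict ((sb K).comp A.T.subtype) A.T (fun t => A.hs t t.2) with hσT
  have hcomphom : A.f.comp σT = L.sg.comp A.f := by
    ext t
    exact A.hcomp t t.2
  obtain ⟨W, hWc, hWe, hWd⟩ := hsep
  obtain ⟨V, hV⟩ := exists_preimage_poly_sb K A.T hWc
  have haM : algebraMap ↥A.T (Om K) = A.T.subtype := rfl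
  have hsbaM : (sb K).comp (algebraMap ↥A.T (Om K)) = (sb K).comp A.T.subtype := rfl
  have hchain : ∀ q : Polynomial ↥A.T,
      sb K (Polynomial.aeval z q) = (q.map ((sb K).comp A.T.subtype)).eval x := by
    intro q
    rw [show Polynomial.aeval z q = Polynomial.eval₂ (algebraMap ↥A.T (Om K)) z q from rfl]
    rw [Polynomial.hom_eval₂, hz, Polynomial.eval_map]
    rfl
  have hVz : Polynomial.aeval z V = 0 := by
    apply (sb K).injective
    rw [map_zero, hchain, hV, hWe]
  have hVz' : Polynomial.aeval z (Polynomial.derivative V) ≠ 0 := by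
    intro e
    apply hWd
    have h2 := hchain (Polynomial.derivative V)
    rw [e, map_zero, ← Polynomial.derivative_map, hV] at h2
    exact h2.symm
  have hsepz : IsSeparable ↥A.T z := isSeparable_of_simple_root hVz hVz'
  have hintz : IsIntegral ↥A.T z := hsepz.isIntegral
  have hmz : Polynomial.aeval z (minpoly ↥A.T z) = 0 := minpoly.aeval _ _
  have hmd : Polynomial.aeval z (Polynomial.derivative (minpoly ↥A.T z)) ≠ 0 :=
    hsepz.aeval_derivative_ne_zero hmz
  have hkey : ∀ q : Polynomial ↥A.T,
      A.T.subtype (Polynomial.eval₂ σT (⟨x, hx⟩ : ↥A.T) q) = sb K (Polynomial.aeval z q) := by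
    intro q
    rw [Polynomial.hom_eval₂]
    rw [show Polynomial.aeval z q = Polynomial.eval₂ (algebraMap ↥A.T (Om K)) z q from rfl]
    rw [Polynomial.hom_eval₂, hz]
    rfl
  have hkey2 : ∀ q : Polynomial ↥A.T,
      (q.map (L.sg.comp A.f)).eval (A.f ⟨x, hx⟩)
        = A.f (Polynomial.eval₂ σT (⟨x, hx⟩ : ↥A.T) q) := by
    intro q
    rw [Polynomial.eval_map, ← hcomphom, Polynomial.hom_eval₂]
  have hfr : A.f ⟨x, hx⟩ ∈ L.sg.fieldRange := by
    apply hLsep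
    refine ⟨(minpoly ↥A.T z).map (L.sg.comp A.f), fun nn => ?_, ?_, ?_⟩
    · rw [Polynomial.coeff_map]
      exact ⟨A.f ((minpoly ↥A.T z).coeff nn), rfl⟩
    · rw [hkey2]
      have h1 : Polynomial.eval₂ σT (⟨x, hx⟩ : ↥A.T) (minpoly ↥A.T z) = 0 := by
        apply A.T.subtype.injective
        rw [hkey, hmz, map_zero, map_zero]
      rw [h1, map_zero]
    · rw [Polynomial.derivative_map, hkey2]
      intro e
      have h1 : Polynomial.eval₂ σT (⟨x, hx⟩ : ↥A.T) (Polynomial.derivative (minpoly ↥A.T z)) = 0 :=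
        A.f.injective (by rw [e, map_zero])
      apply hmd
      apply (sb K).injective
      rw [map_zero, ← hkey, h1, map_zero]
  obtain ⟨v, hv⟩ := hfr
  have hvm : (minpoly ↥A.T z).eval₂ A.f v = 0 := by
    apply L.sg.injective
    rw [map_zero, Polynomial.hom_eval₂, hv, ← hcomphom]
    have h1 : Polynomial.eval₂ (A.f.comp σT) (A.f ⟨x, hx⟩) (minpoly ↥A.T z)
        = A.f (Polynomial.eval₂ σT (⟨x, hx⟩ : ↥A.T) (minpoly ↥A.T z)) :=
      (Polynomial.hom_eval₂ _ _ _ _).symm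
    rw [h1]
    have h2 : Polynomial.eval₂ σT (⟨x, hx⟩ : ↥A.T) (minpoly ↥A.T z) = 0 := by
      apply A.T.subtype.injective
      rw [hkey, hmz, map_zero, map_zero]
    rw [h2, map_zero]
  set F := IntermediateField.adjoin ↥A.T ({z} : Set (Om K)) with hF
  set Snew := F.toSubfield with hSnew
  have hmemS : ∀ w : Om K, w ∈ Snew ↔ w ∈ F := fun w => Iff.rfl
  have hTS : A.T ≤ Snew := by
    intro t ht
    have := F.algebraMap_mem ⟨t, ht⟩
    exact this
  have hzS : z ∈ Snew := IntermediateField.mem_adjoin_simple_self ↥A.T z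
  have hSE : Snew ≤ EE K p := by
    have hzE : z ∈ EE K p :=
      (EE_mem_Fam K p).2.2.2 x (A.hE hx)
        ((SepOver.mono K A.hE ⟨W, hWc, hWe, hWd⟩)) z hz
    set E' := Subfield.toIntermediateField (K := ↥A.T) (EE K p) (fun t => A.hE t.2) with hE'
    have hFE : F ≤ E' := by
      rw [hF, IntermediateField.adjoin_le_iff]
      rintro w hw
      rw [Set.mem_singleton_iff] at hw
      rw [hw]
      exact hzE
    exact fun w hw => hFE hw
  have hSs : ∀ w ∈ Snew, sb K w ∈ Snew := by
    set P' := Subfield.toIntermediateField (K := ↥A.T) (Subfield.comap (sb K) Snew)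
      (fun t => Subfield.mem_comap.mpr (hTS (A.hs t t.2))) with hP'
    have hFP : F ≤ P' := by
      rw [hF, IntermediateField.adjoin_le_iff]
      rintro w hw
      rw [Set.mem_singleton_iff] at hw
      rw [hw]
      show sb K z ∈ Snew
      rw [hz]
      exact hTS hx
    exact fun w hw => Subfield.mem_comap.mp (hFP hw)
  set eqv := IntermediateField.adjoinRootEquivAdjoin ↥A.T hintz with heqv
  set lift0 := AdjoinRoot.lift A.f v hvm with hlift0
  set incl : ↥Snew →+* ↥F :=
    { toFun := fun w => ⟨w.1, w.2⟩
      map_one' := rfl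
      map_mul' := fun _ _ => rfl
      map_zero' := rfl
      map_add' := fun _ _ => rfl } with hincl
  set f' : ↥Snew →+* L.carrier :=
    (lift0.comp eqv.symm.toAlgHom.toRingHom).comp incl with hf'
  have hext : ∀ (t : Om K) (ht : t ∈ A.T), f' ⟨t, hTS ht⟩ = A.f ⟨t, ht⟩ := by
    intro t ht
    show lift0 (eqv.symm (incl ⟨t, hTS ht⟩)) = A.f ⟨t, ht⟩
    have h1 : incl ⟨t, hTS ht⟩ = algebraMap ↥A.T ↥F ⟨t, ht⟩ := Subtype.ext rfl
    rw [h1, AlgEquiv.commutes]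
    rw [show algebraMap ↥A.T (AdjoinRoot (minpoly ↥A.T z)) ⟨t, ht⟩
        = AdjoinRoot.of (minpoly ↥A.T z) ⟨t, ht⟩ from rfl]
    exact AdjoinRoot.lift_of hvm
  have hfz : f' ⟨z, hzS⟩ = v := by
    show lift0 (eqv.symm (incl ⟨z, hzS⟩)) = v
    have h1 : incl ⟨z, hzS⟩ = IntermediateField.AdjoinSimple.gen ↥A.T z := Subtype.ext rfl
    rw [h1, IntermediateField.adjoinRootEquivAdjoin_symm_apply_gen]
    exact AdjoinRoot.lift_root hvm
  have hcompS : ∀ (w : Om K) (hw : w ∈ Snew), f' ⟨sb K w, hSs w hw⟩ = L.sg (f' ⟨w, hw⟩) := by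
    set g₁ : ↥Snew →+* L.carrier :=
      f'.comp (RingHom.codRestrict ((sb K).comp Snew.subtype) Snew (fun w => hSs w w.2)) with hg₁
    set g₂ : ↥Snew →+* L.carrier := L.sg.comp f' with hg₂
    set EqS : Subfield ↥Snew := g₁.eqLocusField g₂ with hEqS
    set EqΩ : Subfield (Om K) := EqS.map Snew.subtype with hEqΩ
    have hmemEq : ∀ (w : Om K) (hw : w ∈ Snew), w ∈ EqΩ → g₁ ⟨w, hw⟩ = g₂ ⟨w, hw⟩ := by
      rintro w hw ⟨w', hw', heq⟩
      have : w' = ⟨w, hw⟩ := Subtype.ext heq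
      rw [← this]
      exact hw'
    have halgmem : ∀ t : ↥A.T, algebraMap ↥A.T (Om K) t ∈ EqΩ := by
      intro t
      refine ⟨⟨(t : Om K), hTS t.2⟩, ?_, rfl⟩
      show g₁ ⟨(t : Om K), hTS t.2⟩ = g₂ ⟨(t : Om K), hTS t.2⟩
      have e1 : g₁ ⟨(t : Om K), hTS t.2⟩ = f' ⟨sb K t, hSs _ (hTS t.2)⟩ := rfl
      have e2 : (⟨sb K (t : Om K), hSs _ (hTS t.2)⟩ : ↥Snew) = ⟨sb K t, hTS (A.hs t t.2)⟩ := rfl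
      rw [e1, e2, hext _ (A.hs t t.2)]
      have e3 : A.f ⟨sb K (t : Om K), A.hs t t.2⟩ = L.sg (A.f ⟨(t : Om K), t.2⟩) := A.hcomp t t.2
      rw [e3]
      show L.sg (A.f ⟨(t : Om K), t.2⟩) = L.sg (f' ⟨(t : Om K), hTS t.2⟩)
      rw [hext _ t.2]
    set Q' := Subfield.toIntermediateField (K := ↥A.T) EqΩ halgmem with hQ'
    have hFQ : F ≤ Q' := by
      rw [hF, IntermediateField.adjoin_le_iff]
      rintro w hw
      rw [Set.mem_singleton_iff] at hw
      rw [hw]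
      show z ∈ EqΩ
      refine ⟨⟨z, hzS⟩, ?_, rfl⟩
      show g₁ ⟨z, hzS⟩ = g₂ ⟨z, hzS⟩
      have e1 : g₁ ⟨z, hzS⟩ = f' ⟨sb K z, hSs _ hzS⟩ := rfl
      have e2 : (⟨sb K z, hSs _ hzS⟩ : ↥Snew) = ⟨x, hTS hx⟩ := Subtype.ext hz
      rw [e1, e2, hext _ hx]
      show A.f ⟨x, hx⟩ = L.sg (f' ⟨z, hzS⟩)
      rw [hfz, hv]
    intro w hw
    exact hmemEq w hw (hFQ hw)
  refine ⟨⟨Snew, A.hK.trans hTS, hSE, hSs, f', hcompS, ?_⟩, ⟨hTS, hext⟩, hzS⟩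
  intro k
  have halg : algebraMap K.carrier (Om K) k ∈ A.T := A.hK ⟨k, rfl⟩
  rw [show (⟨algebraMap K.carrier (Om K) k, _⟩ : ↥Snew)
      = ⟨algebraMap K.carrier (Om K) k, hTS halg⟩ from rfl]
  rw [hext _ halg]
  exact A.hjc k
end Univ3

section Univ4
variable [ExpChar K.carrier p] {L : DiffField.{v}} {j : K.carrier →+* L.carrier}

set_option maxHeartbeats 1000000 in
lemma exists_hom (hj : ∀ k, j (K.sg k) = L.sg (j k))
    (hLtw : ∀ (w : L.carrier) (n : ℕ), ∃ y : L.carrier, y ^ p ^ n = L.sg w)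
    (hLsep : ∀ w : L.carrier, (∃ f : Polynomial L.carrier,
        (∀ n, f.coeff n ∈ L.sg.fieldRange) ∧ f.eval w = 0 ∧
        (Polynomial.derivative f).eval w ≠ 0) → w ∈ L.sg.fieldRange) :
    ∃ e : ↥(EE K p) →+* L.carrier,
      (∀ x, e (sbE K p x) = L.sg (e x)) ∧ e.comp (iota K p) = j := by
  classical
  have hzorn : ∃ m : Partial K p L j, IsMax m := by
    apply zorn_le
    intro c hc
    by_cases hne : c.Nonempty
    · obtain ⟨P1, hP1⟩ := hne
      have coh : ∀ P, P ∈ c → ∀ Q, Q ∈ c → ∀ (x : Om K) (hxP : x ∈ P.T) (hxQ : x ∈ Q.T),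
          P.f ⟨x, hxP⟩ = Q.f ⟨x, hxQ⟩ := by
        intro P hP Q hQ x hxP hxQ
        rcases hc.total hP hQ with ⟨hle, hfe⟩ | ⟨hle, hfe⟩
        · exact (hfe x hxP).symm
        · exact hfe x hxQ
      set Ts : Subfield (Om K) := sSup (Partial.T '' c) with hTs
      have hdir : DirectedOn (· ≤ ·) (Partial.T '' c) := by
        rintro _ ⟨P, hP, rfl⟩ _ ⟨Q, hQ, rfl⟩
        rcases hc.total hP hQ with ⟨hle, _⟩ | ⟨hle, _⟩
        · exact ⟨Q.T, ⟨Q, hQ, rfl⟩, hle, le_refl _⟩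
        · exact ⟨P.T, ⟨P, hP, rfl⟩, le_refl _, hle⟩
      have hmem : ∀ w : Om K, w ∈ Ts ↔ ∃ P, P ∈ c ∧ w ∈ P.T := by
        intro w
        show w ∈ sSup (Partial.T '' c) ↔ _
        rw [Subfield.mem_sSup_of_directedOn (⟨P1.T, Set.mem_image_of_mem _ hP1⟩ : (Partial.T '' c).Nonempty) hdir]
        constructor
        · rintro ⟨_, ⟨P, hP, rfl⟩, hw⟩; exact ⟨P, hP, hw⟩
        · rintro ⟨P, hP, hw⟩; exact ⟨P.T, ⟨P, hP, rfl⟩, hw⟩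
      choose Pick hPick1 hPick2 using fun s : ↥Ts => (hmem s).mp s.2
      have hcohv : ∀ (s : ↥Ts) (Q : Partial K p L j) (hQ : Q ∈ c) (hsQ : (s : Om K) ∈ Q.T),
          (Pick s).f ⟨s, hPick2 s⟩ = Q.f ⟨s, hsQ⟩ := fun s Q hQ hsQ =>
        coh _ (hPick1 s) Q hQ _ (hPick2 s) hsQ
      have hcommon2 : ∀ a b : ↥Ts, ∃ Q, Q ∈ c ∧ (a : Om K) ∈ Q.T ∧ (b : Om K) ∈ Q.T := by
        intro a b
        obtain ⟨_, ⟨Q, hQ, rfl⟩, h1, h2⟩ := hdir _ ⟨Pick a, hPick1 a, rfl⟩ _ ⟨Pick b, hPick1 b, rfl⟩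
        exact ⟨Q, hQ, h1 (hPick2 a), h2 (hPick2 b)⟩
      set fs : ↥Ts →+* L.carrier :=
        { toFun := fun s => (Pick s).f ⟨s, hPick2 s⟩
          map_one' := by
            show (Pick 1).f ⟨((1 : ↥Ts) : Om K), hPick2 1⟩ = 1
            rw [hcohv 1 P1 hP1 (one_mem _)]
            rw [show (⟨((1 : ↥Ts) : Om K), one_mem _⟩ : ↥P1.T) = 1 from Subtype.ext rfl]
            exact P1.f.map_one
          map_mul' := by
            intro a b
            obtain ⟨Q, hQ, ha, hb⟩ := hcommon2 a b
            have hab : ((a * b : ↥Ts) : Om K) ∈ Q.T := mul_mem ha hb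
            show (Pick (a * b)).f ⟨((a * b : ↥Ts) : Om K), hPick2 (a * b)⟩
              = (Pick a).f ⟨(a : Om K), hPick2 a⟩ * (Pick b).f ⟨(b : Om K), hPick2 b⟩
            rw [hcohv a Q hQ ha, hcohv b Q hQ hb, hcohv (a*b) Q hQ hab]
            rw [show (⟨((a * b : ↥Ts) : Om K), hab⟩ : ↥Q.T)
                = ⟨a, ha⟩ * ⟨b, hb⟩ from Subtype.ext rfl]
            exact Q.f.map_mul _ _
          map_zero' := by
            show (Pick 0).f ⟨((0 : ↥Ts) : Om K), hPick2 0⟩ = 0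
            rw [hcohv 0 P1 hP1 (zero_mem _)]
            rw [show (⟨((0 : ↥Ts) : Om K), zero_mem _⟩ : ↥P1.T) = 0 from Subtype.ext rfl]
            exact P1.f.map_zero
          map_add' := by
            intro a b
            obtain ⟨Q, hQ, ha, hb⟩ := hcommon2 a b
            have hab : ((a + b : ↥Ts) : Om K) ∈ Q.T := add_mem ha hb
            show (Pick (a + b)).f ⟨((a + b : ↥Ts) : Om K), hPick2 (a + b)⟩
              = (Pick a).f ⟨(a : Om K), hPick2 a⟩ + (Pick b).f ⟨(b : Om K), hPick2 b⟩
            rw [hcohv a Q hQ ha, hcohv b Q hQ hb, hcohv (a+b) Q hQ hab]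
            rw [show (⟨((a + b : ↥Ts) : Om K), hab⟩ : ↥Q.T)
                = ⟨a, ha⟩ + ⟨b, hb⟩ from Subtype.ext rfl]
            exact Q.f.map_add _ _ } with hfs
      have hfsval : ∀ (w : Om K) (hw : w ∈ Ts) (Q : Partial K p L j) (hQ : Q ∈ c)
          (hwQ : w ∈ Q.T), fs ⟨w, hw⟩ = Q.f ⟨w, hwQ⟩ := fun w hw Q hQ hwQ =>
        hcohv ⟨w, hw⟩ Q hQ hwQ
      refine ⟨⟨Ts, ?_, ?_, ?_, fs, ?_, ?_⟩, ?_⟩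
      · exact P1.hK.trans (le_sSup ⟨P1, hP1, rfl⟩)
      · apply sSup_le
        rintro _ ⟨P, hP, rfl⟩
        exact P.hE
      · intro w hw
        obtain ⟨P, hP, hwP⟩ := (hmem w).mp hw
        exact (hmem _).mpr ⟨P, hP, P.hs w hwP⟩
      · intro w hw
        obtain ⟨P, hP, hwP⟩ := (hmem w).mp hw
        rw [hfsval (sb K w) _ P hP (P.hs w hwP), hfsval w hw P hP hwP]
        exact P.hcomp w hwP
      · intro k
        have halg : algebraMap K.carrier (Om K) k ∈ P1.T := P1.hK ⟨k, rfl⟩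
        rw [hfsval _ _ P1 hP1 halg]
        exact P1.hjc k
      · intro P hP
        refine ⟨le_sSup ⟨P, hP, rfl⟩, ?_⟩
        intro x hx
        exact hfsval x _ P hP hx
    · refine ⟨P0 K p L j hj, ?_⟩
      intro a ha
      exact absurd ⟨a, ha⟩ hne
  obtain ⟨M, hM⟩ := hzorn
  have hMF : M.T ∈ Fam K p := by
    refine ⟨M.hK, M.hs, ?_, ?_⟩
    · intro x hx n y hy
      obtain ⟨B, hAB, hyB⟩ := twist_extend K p hLtw M hx n hy
      obtain ⟨hle, _⟩ := hM hAB
      exact hle hyB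
    · intro x hx hsepx z hz
      obtain ⟨B, hAB, hzB⟩ := sep_extend K p hLsep M hx hsepx hz
      obtain ⟨hle, _⟩ := hM hAB
      exact hle hzB
  have hEM : EE K p ≤ M.T := sInf_le hMF
  refine ⟨M.f.comp (Subfield.inclusion hEM), ?_, ?_⟩
  · intro x
    exact M.hcomp x (hEM x.2)
  · ext k
    exact M.hjc k

lemma e_unique (e₁ e₂ : ↥(EE K p) →+* L.carrier)
    (h₁c : ∀ x, e₁ (sbE K p x) = L.sg (e₁ x)) (h₁j : e₁.comp (iota K p) = j)
    (h₂c : ∀ x, e₂ (sbE K p x) = L.sg (e₂ x)) (h₂j : e₂.comp (iota K p) = j) :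
    e₁ = e₂ := by
  classical
  haveI hXL : ExpChar L.carrier p := expChar_of_injective_ringHom j.injective p
  set EqS := e₁.eqLocusField e₂ with hEqS
  set EqΩ := EqS.map (EE K p).subtype with hEqΩ
  have hEqE : EqΩ ≤ EE K p := by
    rintro w ⟨w', _, rfl⟩
    exact w'.2
  have hFam : EqΩ ∈ Fam K p := by
    refine ⟨?_, ?_, ?_, ?_⟩
    · rintro w ⟨k, rfl⟩
      refine ⟨iota K p k, ?_, rfl⟩
      show e₁ (iota K p k) = e₂ (iota K p k)
      rw [show e₁ (iota K p k) = (e₁.comp (iota K p)) k from rfl, h₁j,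
        show e₂ (iota K p k) = (e₂.comp (iota K p)) k from rfl, h₂j]
    · rintro w ⟨w', hw', rfl⟩
      refine ⟨sbE K p w', ?_, rfl⟩
      show e₁ (sbE K p w') = e₂ (sbE K p w')
      rw [h₁c, h₂c]
      rw [show e₁ w' = e₂ w' from hw']
    · rintro w ⟨w', hw', rfl⟩ n y hy
      have hyE : y ∈ EE K p := (EE_mem_Fam K p).2.2.1 _ w'.2 n y hy
      refine ⟨⟨y, hyE⟩, ?_, rfl⟩
      show e₁ ⟨y, hyE⟩ = e₂ ⟨y, hyE⟩
      apply pow_p_injective (F := L.carrier) p n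
      show e₁ ⟨y, hyE⟩ ^ p ^ n = e₂ ⟨y, hyE⟩ ^ p ^ n
      have hyP : (⟨y, hyE⟩ : ↥(EE K p)) ^ p ^ n = sbE K p w' := Subtype.ext (by push_cast; exact hy)
      rw [← map_pow, ← map_pow, hyP, h₁c, h₂c]
      rw [show e₁ w' = e₂ w' from hw']
    · rintro w ⟨w', hw', rfl⟩ hsepw z hz
      have hzE : z ∈ EE K p :=
        (EE_mem_Fam K p).2.2.2 _ w'.2 (hsepw.mono K hEqE) z hz
      refine ⟨⟨z, hzE⟩, ?_, rfl⟩
      show e₁ ⟨z, hzE⟩ = e₂ ⟨z, hzE⟩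
      apply L.sg.injective
      have hsbz : sbE K p ⟨z, hzE⟩ = w' := Subtype.ext hz
      rw [← h₁c, ← h₂c, hsbz]
      exact hw'
  have hle : EE K p ≤ EqΩ := sInf_le hFam
  ext u
  obtain ⟨u', hu', hval⟩ := hle u.2
  rw [show u = u' from Subtype.ext hval.symm]
  exact hu'
end Univ4
end S5

theorem statement5 (p : ℕ) (K : DiffField.{u}) [ExpChar K.carrier p] :
    ∃ (E : DiffField.{u}) (ι : K.carrier →+* E.carrier),
      -- ι is an embedding of difference fields
      (∀ x, ι (K.sg x) = E.sg (ι x)) ∧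
      -- E is a model of FF
      IsFF p E.sg ∧
      -- E is algebraic over K
      (∀ x : E.carrier, IsAlgElemOver ι.fieldRange x) ∧
      -- universal property: unique difference-field embedding over K into every
      -- model of FF extending K
      (∀ (L : DiffField.{v}) (j : K.carrier →+* L.carrier),
        (∀ x, j (K.sg x) = L.sg (j x)) → IsFF p L.sg →
        ∃! e : E.carrier →+* L.carrier,
          (∀ x, e (E.sg x) = L.sg (e x)) ∧ e.comp ι = j) ∧
      -- moreover, if K is closed under twists then E is separably algebraic over K
      (ClosedUnderTwists p K.sg → ∀ x : E.carrier, IsSepAlgElemOver ι.fieldRange x) := by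
  classical
  refine ⟨⟨↥(S5.EE K p), S5.sbE K p⟩, S5.iota K p, fun k => S5.iota_sb K p k,
    ⟨S5.twists_EE K p, fun x hx => S5.sepcl_EE K p x hx⟩,
    fun x => S5.alg_EE K p x, ?_, fun hKtw x => S5.sep_EE K p hKtw x⟩
  intro L j hjc hLFF
  obtain ⟨e, hc, hcompj⟩ := S5.exists_hom K p hjc hLFF.1 (fun w hw => hLFF.2 w hw)
  refine ⟨e, ⟨hc, hcompj⟩, ?_⟩
  rintro e' ⟨h'c, h'j⟩
  exact S5.e_unique K p e' e h'c h'j hc hcompj
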